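/- Let Φ be an extremal nondegenerate qubit channel and Φ = Φ₁ ∘ Φ₂ a decomposition into qubit channels. Then both Φ₁ and Φ₂ are extremal in the convex set of qubit channels. -/

import Mathlib

open Matrix Kronecker
open scoped ComplexOrder

noncomputable section

/-- The Choi matrix `C_Φ = (1/2) ∑_{i,j} Φ(E_{ij}) ⊗ E_{ij}`. -/
def choiMatrix (f : Matrix (Fin 2) (Fin 2) ℂ → Matrix (Fin 2) (Fin 2) ℂ) :
    Matrix (Fin 2 × Fin 2) (Fin 2 × Fin 2) ℂ :=
  (1 / 2 : ℂ) • ∑ i : Fin 2, ∑ j : Fin 2,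
    (f (Matrix.single i j 1)) ⊗ₖ (Matrix.single i j 1)

/-- The convex set of qubit channels: trace-preserving linear maps on `M₂(ℂ)` with
positive semidefinite Choi matrix (complete positivity). -/
def qubitChannels : Set (Matrix (Fin 2) (Fin 2) ℂ →ₗ[ℂ] Matrix (Fin 2) (Fin 2) ℂ) :=
  {Φ | (∀ ρ, (Φ ρ).trace = ρ.trace) ∧ (choiMatrix Φ).PosSemidef}

lemma choi_apply (f : Matrix (Fin 2) (Fin 2) ℂ → Matrix (Fin 2) (Fin 2) ℂ)
    (a b c d : Fin 2) :
    choiMatrix f (a, b) (c, d) = (1 / 2 : ℂ) * f (single b d 1) a c := by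
  simp only [choiMatrix, Matrix.smul_apply, Matrix.sum_apply, Matrix.kroneckerMap_apply,
    smul_eq_mul]
  congr 1
  rw [Finset.sum_eq_single b, Finset.sum_eq_single d]
  · simp [single]
  · intro j _ hj; simp [single, hj]
  · simp
  · intro i _ hi
    apply Finset.sum_eq_zero
    intro j _
    simp [single, hi]
  · simp

lemma conjTranspose_mul_apply' {m n : Type*} [Fintype m]
    (B : Matrix m n ℂ) (x y : n) : (Bᴴ * B) x y = ∑ k, star (B k x) * B k y := by
  simp [Matrix.mul_apply, Matrix.conjTranspose_apply]

lemma kraus_of_psd {f : Matrix (Fin 2) (Fin 2) ℂ → Matrix (Fin 2) (Fin 2) ℂ}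
    (hf : (choiMatrix f).PosSemidef) :
    ∃ A : Fin 2 × Fin 2 → Matrix (Fin 2) (Fin 2) ℂ,
      ∀ a b c d : Fin 2,
        f (single b d 1) a c = ∑ k, A k a b * star (A k c d) := by
  obtain ⟨B, hB⟩ : ∃ B : Matrix (Fin 2 × Fin 2) (Fin 2 × Fin 2) ℂ, choiMatrix f = Bᴴ * B := by
    open scoped MatrixOrder in
    exact CStarAlgebra.nonneg_iff_eq_star_mul_self.mp hf.nonneg
  refine ⟨fun k => Matrix.of fun a b => (Real.sqrt 2 : ℂ) * star (B k (a, b)),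
    fun a b c d => ?_⟩
  have h := congrArg (fun M : Matrix (Fin 2 × Fin 2) (Fin 2 × Fin 2) ℂ => M (a, b) (c, d)) hB
  simp only [choi_apply, conjTranspose_mul_apply'] at h
  have h2 : f (single b d 1) a c = 2 * ∑ k, star (B k (a, b)) * B k (c, d) := by
    field_simp at h ⊢
    linear_combination h
  rw [h2, Finset.mul_sum]
  refine Finset.sum_congr rfl fun k _ => ?_
  have : ((Real.sqrt 2 : ℝ) : ℂ) * (Real.sqrt 2 : ℝ) = 2 := by
    rw [← Complex.ofReal_mul, Real.mul_self_sqrt (by norm_num)]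
    norm_num
  have hs : star ((Real.sqrt 2 : ℝ) : ℂ) = ((Real.sqrt 2 : ℝ) : ℂ) := by
    rw [Complex.star_def, Complex.conj_ofReal]
  simp only [Matrix.of_apply, star_mul', star_star, hs]
  linear_combination -(star (B k (a, b)) * B k (c, d)) * this

lemma psd_of_kraus (f : Matrix (Fin 2) (Fin 2) ℂ → Matrix (Fin 2) (Fin 2) ℂ)
    {ι : Type} [Fintype ι] (A : ι → Matrix (Fin 2) (Fin 2) ℂ)
    (h : ∀ a b c d : Fin 2,
      f (single b d 1) a c = ∑ k, A k a b * star (A k c d)) :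
    (choiMatrix f).PosSemidef := by
  set M : Matrix ι (Fin 2 × Fin 2) ℂ :=
    Matrix.of fun k p => (((Real.sqrt 2)⁻¹ : ℝ) : ℂ) * star (A k p.1 p.2) with hM
  have key : choiMatrix f = Mᴴ * M := by
    ext ⟨a, b⟩ ⟨c, d⟩
    rw [choi_apply, conjTranspose_mul_apply', h, Finset.mul_sum]
    refine Finset.sum_congr rfl fun k _ => ?_
    have hs : star ((((Real.sqrt 2)⁻¹ : ℝ)) : ℂ) = (((Real.sqrt 2)⁻¹ : ℝ) : ℂ) := by
      rw [Complex.star_def, Complex.conj_ofReal]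
    have t : ((((Real.sqrt 2)⁻¹ : ℝ)) : ℂ) * (((Real.sqrt 2)⁻¹ : ℝ) : ℂ) = 1 / 2 := by
      rw [← Complex.ofReal_mul, ← mul_inv, Real.mul_self_sqrt (by norm_num)]
      norm_num
    simp only [hM, Matrix.of_apply, star_mul', star_star, hs]
    linear_combination -(A k a b * star (A k c d)) * t
  rw [key]
  exact Matrix.posSemidef_conjTranspose_mul_self M

lemma linearMap_apply_eq (f : Matrix (Fin 2) (Fin 2) ℂ →ₗ[ℂ] Matrix (Fin 2) (Fin 2) ℂ)
    (X : Matrix (Fin 2) (Fin 2) ℂ) (a c : Fin 2) :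
    f X a c = ∑ p : Fin 2, ∑ q : Fin 2, X p q * f (single p q 1) a c := by
  conv_lhs => rw [matrix_eq_sum_single X]
  rw [map_sum]
  simp only [Matrix.sum_apply]
  refine Finset.sum_congr rfl fun p _ => ?_
  rw [map_sum]
  simp only [Matrix.sum_apply]
  refine Finset.sum_congr rfl fun q _ => ?_
  have : single p q (X p q) = X p q • single p q (1 : ℂ) := by
    rw [smul_single, smul_eq_mul, mul_one]
  rw [this, _root_.map_smul, Matrix.smul_apply, smul_eq_mul]

lemma kraus_comp (f g : Matrix (Fin 2) (Fin 2) ℂ →ₗ[ℂ] Matrix (Fin 2) (Fin 2) ℂ)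
    (A B : Fin 2 × Fin 2 → Matrix (Fin 2) (Fin 2) ℂ)
    (hA : ∀ a b c d : Fin 2, f (single b d 1) a c = ∑ k, A k a b * star (A k c d))
    (hB : ∀ a b c d : Fin 2, g (single b d 1) a c = ∑ k, B k a b * star (B k c d))
    (a b c d : Fin 2) :
    (f ∘ₗ g) (single b d 1) a c
      = ∑ kl : (Fin 2 × Fin 2) × (Fin 2 × Fin 2),
          (A kl.1 * B kl.2) a b * star ((A kl.1 * B kl.2) c d) := by
  rw [LinearMap.comp_apply, linearMap_apply_eq f (g (single b d 1)) a c]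
  simp only [hA, hB, Matrix.mul_apply]
  simp only [Fintype.sum_prod_type, Fin.sum_univ_two, star_add, star_mul']
  ring


lemma comp_mem_qubitChannels {f g : Matrix (Fin 2) (Fin 2) ℂ →ₗ[ℂ] Matrix (Fin 2) (Fin 2) ℂ}
    (hf : f ∈ qubitChannels) (hg : g ∈ qubitChannels) :
    f ∘ₗ g ∈ qubitChannels := by
  constructor
  · intro ρ
    rw [LinearMap.comp_apply, hf.1, hg.1]
  · obtain ⟨A, hA⟩ := kraus_of_psd hf.2
    obtain ⟨B, hB⟩ := kraus_of_psd hg.2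
    exact psd_of_kraus _ (fun kl : (Fin 2 × Fin 2) × (Fin 2 × Fin 2) => A kl.1 * B kl.2)
      (fun a b c d => kraus_comp f g A B hA hB a b c d)

lemma comp_smul_add (f g₁ g₂ : Matrix (Fin 2) (Fin 2) ℂ →ₗ[ℂ] Matrix (Fin 2) (Fin 2) ℂ)
    (a b : ℝ) :
    f ∘ₗ (a • g₁ + b • g₂) = a • (f ∘ₗ g₁) + b • (f ∘ₗ g₂) := by
  ext x : 1
  simp [map_add, LinearMap.map_smul_of_tower]

lemma smul_add_comp (f₁ f₂ g : Matrix (Fin 2) (Fin 2) ℂ →ₗ[ℂ] Matrix (Fin 2) (Fin 2) ℂ)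
    (a b : ℝ) :
    (a • f₁ + b • f₂) ∘ₗ g = a • (f₁ ∘ₗ g) + b • (f₂ ∘ₗ g) := by
  ext x : 1
  simp


/-- If an extremal nondegenerate (injective) qubit channel decomposes as `Φ = Φ₁ ∘ Φ₂`
with `Φ₁, Φ₂` qubit channels, then both `Φ₁` and `Φ₂` are extremal in the convex set of
qubit channels. -/
theorem extremal_factors
    (Φ Φ₁ Φ₂ : Matrix (Fin 2) (Fin 2) ℂ →ₗ[ℂ] Matrix (Fin 2) (Fin 2) ℂ)
    (hΦ : Φ ∈ qubitChannels.extremePoints ℝ)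
    (hinj : Function.Injective Φ)
    (h₁ : Φ₁ ∈ qubitChannels) (h₂ : Φ₂ ∈ qubitChannels)
    (hcomp : Φ = Φ₁ ∘ₗ Φ₂) :
    Φ₁ ∈ qubitChannels.extremePoints ℝ ∧ Φ₂ ∈ qubitChannels.extremePoints ℝ := by
  have hc : ⇑Φ = ⇑Φ₁ ∘ ⇑Φ₂ := by rw [hcomp]; rfl
  have h₂inj : Function.Injective Φ₂ := Function.Injective.of_comp (hc ▸ hinj)
  have h₂surj : Function.Surjective Φ₂ := LinearMap.injective_iff_surjective.mp h₂inj
  have h₁surj : Function.Surjective Φ₁ :=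
    Function.Surjective.of_comp (hc ▸ LinearMap.injective_iff_surjective.mp hinj)
  have h₁inj : Function.Injective Φ₁ := LinearMap.injective_iff_surjective.mpr h₁surj
  constructor
  · refine mem_extremePoints.mpr ⟨h₁, fun Ψ₁ hΨ₁ Ψ₂ hΨ₂ hseg => ?_⟩
    obtain ⟨a, b, ha, hb, hab, hsum⟩ := hseg
    have hΦseg : Φ ∈ openSegment ℝ (Ψ₁ ∘ₗ Φ₂) (Ψ₂ ∘ₗ Φ₂) := by
      refine ⟨a, b, ha, hb, hab, ?_⟩
      rw [← smul_add_comp, hsum, ← hcomp]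
    obtain ⟨e₁, e₂⟩ := (mem_extremePoints.mp hΦ).2 _ (comp_mem_qubitChannels hΨ₁ h₂)
      _ (comp_mem_qubitChannels hΨ₂ h₂) hΦseg
    constructor
    · ext x : 1
      obtain ⟨y, rfl⟩ := h₂surj x
      have := congrArg (fun F : Matrix (Fin 2) (Fin 2) ℂ →ₗ[ℂ] Matrix (Fin 2) (Fin 2) ℂ
        => F y) (e₁.trans hcomp)
      simpa using this
    · ext x : 1
      obtain ⟨y, rfl⟩ := h₂surj x
      have := congrArg (fun F : Matrix (Fin 2) (Fin 2) ℂ →ₗ[ℂ] Matrix (Fin 2) (Fin 2) ℂ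
        => F y) (e₂.trans hcomp)
      simpa using this
  · refine mem_extremePoints.mpr ⟨h₂, fun Ψ₁ hΨ₁ Ψ₂ hΨ₂ hseg => ?_⟩
    obtain ⟨a, b, ha, hb, hab, hsum⟩ := hseg
    have hΦseg : Φ ∈ openSegment ℝ (Φ₁ ∘ₗ Ψ₁) (Φ₁ ∘ₗ Ψ₂) := by
      refine ⟨a, b, ha, hb, hab, ?_⟩
      rw [← comp_smul_add, hsum, ← hcomp]
    obtain ⟨e₁, e₂⟩ := (mem_extremePoints.mp hΦ).2 _ (comp_mem_qubitChannels h₁ hΨ₁)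
      _ (comp_mem_qubitChannels h₁ hΨ₂) hΦseg
    constructor
    · ext x : 1
      have := congrArg (fun F : Matrix (Fin 2) (Fin 2) ℂ →ₗ[ℂ] Matrix (Fin 2) (Fin 2) ℂ
        => F x) (e₁.trans hcomp)
      exact h₁inj this
    · ext x : 1
      have := congrArg (fun F : Matrix (Fin 2) (Fin 2) ℂ →ₗ[ℂ] Matrix (Fin 2) (Fin 2) ℂ
        => F x) (e₂.trans hcomp)
      exact h₁inj this


end
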